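/- Let A be a commutative ring, I an ideal of A, and S a truncation set. Then: (1) X_S(A) is a closed subring of A^S and X_S(I) is a closed ideal of X_S(A); (2) for every m ∈ S the Frobenius and Verschiebung restrict, i.e. F_m(X_S(A)) ⊆ X_{S/m}(A), V_m(X_{S/m}(A)) ⊆ X_S(A), F_m(X_S(I)) ⊆ X_{S/m}(I) and V_m(X_{S/m}(I)) ⊆ X_S(I). -/

import Mathlib

/-- `S/n = {ν : νn ∈ S}`. -/
def truncDiv (S : Set ℕ) (n : ℕ) : Set ℕ := {ν | ν * n ∈ S}

/-- A truncation set: a nonempty set of positive integers closed under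
taking positive divisors. -/
def IsTruncationSet (S : Set ℕ) : Prop :=
  S.Nonempty ∧ (∀ n ∈ S, 0 < n) ∧ ∀ n ∈ S, ∀ d : ℕ, d ∣ n → 0 < d → d ∈ S

/-- Frobenius `F_n : A^S → A^{S/n}`, `F_n(a)_ν = a_{νn}`. -/
def Frob {A : Type*} [CommRing A] (S : Set ℕ) (n : ℕ) (a : S → A) :
    truncDiv S n → A :=
  fun ν => a ⟨ν.1 * n, ν.2⟩

/-- Verschiebung `V_n : A^{S/n} → A^S`, `V_n(a)_μ = n·a_{μ/n}` if `n ∣ μ`,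
else `0`. -/
def Versch {A : Type*} [CommRing A] (S : Set ℕ) (n : ℕ)
    (a : truncDiv S n → A) : S → A :=
  fun μ =>
    if h : n ∣ μ.1 then
      (n : A) * a ⟨μ.1 / n, show μ.1 / n * n ∈ S by
        rw [Nat.div_mul_cancel h]; exact μ.2⟩
    else 0

/-- The product topology on `A^S`, `A` discrete. -/
def prodTop (S : Set ℕ) (A : Type*) : TopologicalSpace (S → A) :=
  @Pi.topologicalSpace S (fun _ => A) fun _ => ⊥

/-- `X_S(J)`: the topological closure of the additive subgroup of `A^S`
generated by the elements `V_n⟨a⟩`, `n ∈ S`, `a ∈ J`, where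
`V_n⟨a⟩ = V_n((a^ν)_{ν ∈ S/n})`. -/
def XS (S : Set ℕ) {A : Type*} [CommRing A] (J : Set A) : Set (S → A) :=
  @closure _ (prodTop S A)
    (AddSubgroup.closure
      {x | ∃ n ∈ S, ∃ a ∈ J, x = Versch S n fun ν => a ^ ν.1} : Set (S → A))

section aux
variable {A : Type*} [CommRing A]

lemma versch_add (S : Set ℕ) (n : ℕ) (x y : truncDiv S n → A) :
    Versch S n (x + y) = Versch S n x + Versch S n y := by
  funext μ
  simp only [Versch, Pi.add_apply]
  split
  · ring
  · ring

lemma versch_neg (S : Set ℕ) (n : ℕ) (x : truncDiv S n → A) :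
    Versch S n (-x) = -Versch S n x := by
  funext μ
  simp only [Versch, Pi.neg_apply]
  split
  · ring
  · ring

lemma versch_zero (S : Set ℕ) (n : ℕ) :
    Versch S n (0 : truncDiv S n → A) = 0 := by
  funext μ
  simp only [Versch, Pi.zero_apply]
  split <;> simp

lemma versch_eq_zero (S : Set ℕ) (n : ℕ) (h : ∀ μ ∈ S, ¬ n ∣ μ)
    (c : truncDiv S n → A) : Versch S n c = 0 := by
  funext μ
  simp only [Versch, Pi.zero_apply]
  rw [dif_neg (h μ.1 μ.2)]

lemma mydiv_helper {n l μ : ℕ} (hn : 0 < n) (hl : 0 < l) (hnl : n ∣ l)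
    (hlμ : l ∣ μ) : l / n * (μ / l) = μ / n := by
  obtain ⟨k, rfl⟩ := hlμ
  rw [Nat.mul_div_cancel_left k hl]
  obtain ⟨j, rfl⟩ := hnl
  rw [Nat.mul_div_cancel_left j hn, Nat.mul_assoc, Nat.mul_div_cancel_left _ hn]

lemma gen_mul (S : Set ℕ) {n m : ℕ} (hn : 0 < n) (hm : 0 < m) (a b : A) :
    (Versch S n fun ν => a ^ ν.1) * (Versch S m fun ν => b ^ ν.1)
      = Nat.gcd n m •
        Versch S (Nat.lcm n m)
          (fun ν => (a ^ (Nat.lcm n m / n) * b ^ (Nat.lcm n m / m)) ^ ν.1) := by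
  have hl : 0 < Nat.lcm n m := Nat.lcm_pos hn hm
  funext μ
  simp only [Versch, Pi.mul_apply, Pi.smul_apply, nsmul_eq_mul]
  by_cases h : Nat.lcm n m ∣ μ.1
  · have h1 : n ∣ μ.1 := (Nat.dvd_lcm_left n m).trans h
    have h2 : m ∣ μ.1 := (Nat.dvd_lcm_right n m).trans h
    rw [dif_pos h, dif_pos h1, dif_pos h2]
    rw [mul_pow, ← pow_mul, ← pow_mul,
      mydiv_helper hn hl (Nat.dvd_lcm_left n m) h,
      mydiv_helper hm hl (Nat.dvd_lcm_right n m) h]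
    have key : ((Nat.gcd n m : A)) * (Nat.lcm n m : A) = (n : A) * m := by
      exact_mod_cast congrArg (Nat.cast : ℕ → A) (Nat.gcd_mul_lcm n m)
    linear_combination (-(a ^ (μ.1 / n) * b ^ (μ.1 / m))) * key
  · rw [dif_neg h]
    by_cases h1 : n ∣ μ.1
    · have h2 : ¬ m ∣ μ.1 := fun h2 => h (Nat.lcm_dvd h1 h2)
      rw [dif_neg h2]; ring
    · rw [dif_neg h1]; ring
end aux
section aux2
variable {A : Type*} [CommRing A]

lemma frob_gen (S : Set ℕ) {n m : ℕ} (hn : 0 < n) (hm : 0 < m) (a : A) :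
    Frob S m (Versch S n fun ν => a ^ ν.1)
      = Nat.gcd n m •
        Versch (truncDiv S m) (n / Nat.gcd n m)
          (fun ν => (a ^ (m / Nat.gcd n m)) ^ ν.1) := by
  set d := Nat.gcd n m with hd
  have hd0 : 0 < d := Nat.gcd_pos_of_pos_left m hn
  have hdn : d ∣ n := Nat.gcd_dvd_left n m
  have hdm : d ∣ m := Nat.gcd_dvd_right n m
  have hnd0 : 0 < n / d := Nat.div_pos (Nat.le_of_dvd hn hdn) hd0
  funext ν
  simp only [Frob, Versch, Pi.smul_apply, nsmul_eq_mul]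
  have hiff : n ∣ ν.1 * m ↔ n / d ∣ ν.1 := by
    constructor
    · intro h
      have h' : n / d ∣ ν.1 * (m / d) := by
        have : d * (n / d) ∣ d * (ν.1 * (m / d)) := by
          rw [Nat.mul_div_cancel' hdn]
          calc n ∣ ν.1 * m := h
            _ = d * (ν.1 * (m / d)) := by
              rw [← Nat.mul_assoc, Nat.mul_comm d ν.1, Nat.mul_assoc,
                Nat.mul_div_cancel' hdm]
        exact (Nat.mul_dvd_mul_iff_left hd0).1 this
      exact (Nat.coprime_div_gcd_div_gcd hd0).dvd_of_dvd_mul_right h'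
    · intro h
      calc n = d * (n / d) := (Nat.mul_div_cancel' hdn).symm
        _ ∣ m * ν.1 := Nat.mul_dvd_mul (hd ▸ hdm) h
        _ = ν.1 * m := Nat.mul_comm m ν.1
  by_cases h : n / d ∣ ν.1
  · rw [dif_pos (hiff.2 h), dif_pos h]
    obtain ⟨k, hk⟩ := h
    have hνd : ν.1 / (n / d) = k := by rw [hk, Nat.mul_div_cancel_left k hnd0]
    have hexp : ν.1 * m / n = m / d * k := by
      set p := n / d with hp
      set q := m / d with hq
      have e1 : d * p = n := Nat.mul_div_cancel' hdn
      have e2 : d * q = m := Nat.mul_div_cancel' hdm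
      have : ν.1 * m = n * (q * k) := by rw [hk, ← e1, ← e2]; ring
      rw [this, Nat.mul_div_cancel_left _ hn]
    rw [hνd, hexp, ← pow_mul]
    have key : ((d : A)) * ((n / d : ℕ) : A) = (n : A) := by
      exact_mod_cast congrArg (Nat.cast : ℕ → A) (Nat.mul_div_cancel' hdn)
    linear_combination (-(a ^ (m / d * k))) * key
  · rw [dif_neg (fun hh => h (hiff.1 hh)), dif_neg h, mul_zero]

lemma versch_versch (S : Set ℕ) {n m : ℕ} (hn : 0 < n) (hm : 0 < m) (a : A) :
    Versch S m (Versch (truncDiv S m) n fun ν => a ^ ν.1)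
      = Versch S (n * m) (fun ν => a ^ ν.1) := by
  funext μ
  simp only [Versch]
  by_cases h1 : m ∣ μ.1
  case neg =>
    have h3 : ¬ n * m ∣ μ.1 := fun h3 => h1 ((Dvd.intro_left n rfl).trans h3)
    rw [dif_neg h1, dif_neg h3]
  case pos =>
    by_cases h2 : n ∣ μ.1 / m
    case pos =>
      have h3 : n * m ∣ μ.1 := by
        rw [Nat.mul_comm]
        exact (Nat.dvd_div_iff_mul_dvd h1).1 h2
      rw [dif_pos h1, dif_pos h2, dif_pos h3]
      have h4 : μ.1 / m / n = μ.1 / (n * m) := by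
        rw [Nat.div_div_eq_div_mul, Nat.mul_comm m n]
      rw [h4]
      push_cast
      ring
    case neg =>
      have h3 : ¬ n * m ∣ μ.1 := by
        intro h3
        exact h2 ((Nat.dvd_div_iff_mul_dvd h1).2 (by rwa [Nat.mul_comm] at h3))
      rw [dif_pos h1, dif_neg h2, dif_neg h3, mul_zero]
end aux2
section grp
variable {A : Type*} [CommRing A]

def XGens (S : Set ℕ) (J : Set A) : Set (S → A) :=
  {x | ∃ n ∈ S, ∃ a ∈ J, x = Versch S n fun ν => a ^ ν.1}

lemma frob_add (S : Set ℕ) (m : ℕ) (x y : S → A) :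
    Frob S m (x + y) = Frob S m x + Frob S m y := rfl

lemma frob_neg (S : Set ℕ) (m : ℕ) (x : S → A) :
    Frob S m (-x) = -Frob S m x := rfl

lemma frob_zero (S : Set ℕ) (m : ℕ) :
    Frob S m (0 : S → A) = 0 := rfl

lemma grp_mul {S : Set ℕ} (hS : IsTruncationSet S) {J : Set A}
    (hJ : ∀ c : A, ∀ b ∈ J, ∀ k : ℕ, 0 < k → c * b ^ k ∈ J) :
    ∀ x ∈ AddSubgroup.closure (XGens S (Set.univ : Set A)),
    ∀ y ∈ AddSubgroup.closure (XGens S J),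
      x * y ∈ AddSubgroup.closure (XGens S J) := by
  intro x hx
  induction hx using AddSubgroup.closure_induction with
  | mem g hg =>
    intro y hy
    induction hy using AddSubgroup.closure_induction with
    | mem g' hg' =>
      obtain ⟨n, hn, a, -, rfl⟩ := hg
      obtain ⟨m, hm, b, hb, rfl⟩ := hg'
      have hn0 : 0 < n := hS.2.1 n hn
      have hm0 : 0 < m := hS.2.1 m hm
      have hl0 : 0 < Nat.lcm n m := Nat.lcm_pos hn0 hm0
      rw [gen_mul S hn0 hm0 a b]
      by_cases hl : Nat.lcm n m ∈ S
      · refine AddSubgroup.nsmul_mem _ (AddSubgroup.subset_closure ?_) _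
        refine ⟨Nat.lcm n m, hl, a ^ (Nat.lcm n m / n) * b ^ (Nat.lcm n m / m), ?_, rfl⟩
        exact hJ (a ^ (Nat.lcm n m / n)) b hb _
          (Nat.div_pos (Nat.le_of_dvd hl0 (Nat.dvd_lcm_right n m)) hm0)
      · rw [versch_eq_zero S _ (fun μ hμ hdvd => hl (hS.2.2 μ hμ _ hdvd hl0))]
        rw [smul_zero]
        exact zero_mem _
    | zero => rw [mul_zero]; exact zero_mem _
    | add y z _ _ ihy ihz => rw [mul_add]; exact add_mem ihy ihz
    | neg y _ ihy => rw [mul_neg]; exact neg_mem ihy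
  | zero => intro y hy; rw [zero_mul]; exact zero_mem _
  | add x z _ _ ihx ihz =>
    intro y hy; rw [add_mul]; exact add_mem (ihx y hy) (ihz y hy)
  | neg x _ ihx => intro y hy; rw [neg_mul]; exact neg_mem (ihx y hy)

lemma grp_frob {S : Set ℕ} (hS : IsTruncationSet S) {J : Set A}
    (hJ : ∀ b ∈ J, ∀ k : ℕ, 0 < k → b ^ k ∈ J) {m : ℕ} (hm : m ∈ S) :
    ∀ x ∈ AddSubgroup.closure (XGens S J),
      Frob S m x ∈ AddSubgroup.closure (XGens (truncDiv S m) J) := by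
  intro x hx
  have hm0 : 0 < m := hS.2.1 m hm
  induction hx using AddSubgroup.closure_induction with
  | mem g hg =>
    obtain ⟨n, hn, a, ha, rfl⟩ := hg
    have hn0 : 0 < n := hS.2.1 n hn
    set d := Nat.gcd n m with hd
    have hd0 : 0 < d := Nat.gcd_pos_of_pos_left m hn0
    have hnd0 : 0 < n / d := Nat.div_pos (Nat.le_of_dvd hn0 (Nat.gcd_dvd_left n m)) hd0
    rw [frob_gen S hn0 hm0 a]
    by_cases h : n / d ∈ truncDiv S m
    · refine AddSubgroup.nsmul_mem _ (AddSubgroup.subset_closure ?_) _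
      refine ⟨n / d, h, a ^ (m / d), ?_, rfl⟩
      exact hJ a ha _ (Nat.div_pos (Nat.le_of_dvd hm0 (Nat.gcd_dvd_right n m)) hd0)
    · rw [versch_eq_zero _ _ (fun μ hμ hdvd => ?_), smul_zero]
      · exact zero_mem _
      · exact h (hS.2.2 (μ * m) hμ (n / d * m)
          (Nat.mul_dvd_mul_right hdvd m) (Nat.mul_pos hnd0 hm0))
  | zero => rw [frob_zero]; exact zero_mem _
  | add x y _ _ ihx ihy => rw [frob_add]; exact add_mem ihx ihy
  | neg x _ ihx => rw [frob_neg]; exact neg_mem ihx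

lemma grp_versch {S : Set ℕ} (hS : IsTruncationSet S) (J : Set A) {m : ℕ}
    (hm : m ∈ S) :
    ∀ x ∈ AddSubgroup.closure (XGens (truncDiv S m) J),
      Versch S m x ∈ AddSubgroup.closure (XGens S J) := by
  intro x hx
  have hm0 : 0 < m := hS.2.1 m hm
  induction hx using AddSubgroup.closure_induction with
  | mem g hg =>
    obtain ⟨n, hn, a, ha, rfl⟩ := hg
    have hnm : n * m ∈ S := hn
    have hn0 : 0 < n := by
      have h := hS.2.1 _ hnm
      rcases Nat.eq_zero_or_pos n with h0 | h0
      · subst h0; simp at h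
      · exact h0
    rw [versch_versch S hn0 hm0 a]
    exact AddSubgroup.subset_closure ⟨n * m, hnm, a, ha, rfl⟩
  | zero => rw [versch_zero]; exact zero_mem _
  | add x y _ _ ihx ihy => rw [versch_add]; exact add_mem ihx ihy
  | neg x _ ihx => rw [versch_neg]; exact neg_mem ihx

end grp

/-- For a commutative ring `A`, an ideal `I ⊆ A` and a truncation set `S`:
`X_S(A)` is a closed subring of `A^S`, `X_S(I)` is a closed ideal of `X_S(A)`,
and the Frobenius and Verschiebung maps restrict to `X_S(A)` and `X_S(I)`. -/
theorem statement1 {A : Type*} [CommRing A] (S : Set ℕ)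
    (hS : IsTruncationSet S) (I : Ideal A) :
    -- X_S(A) is a closed subring of A^S
    @IsClosed _ (prodTop S A) (XS S (Set.univ : Set A)) ∧
    (1 ∈ XS S (Set.univ : Set A)) ∧
    (∀ x y, x ∈ XS S (Set.univ : Set A) → y ∈ XS S (Set.univ : Set A) →
      x + y ∈ XS S (Set.univ : Set A)) ∧
    (∀ x, x ∈ XS S (Set.univ : Set A) → -x ∈ XS S (Set.univ : Set A)) ∧
    (∀ x y, x ∈ XS S (Set.univ : Set A) → y ∈ XS S (Set.univ : Set A) →
      x * y ∈ XS S (Set.univ : Set A)) ∧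
    -- X_S(I) is a closed ideal in X_S(A)
    @IsClosed _ (prodTop S A) (XS S (I : Set A)) ∧
    XS S (I : Set A) ⊆ XS S (Set.univ : Set A) ∧
    (∀ x y, x ∈ XS S (I : Set A) → y ∈ XS S (I : Set A) →
      x + y ∈ XS S (I : Set A)) ∧
    (∀ x, x ∈ XS S (I : Set A) → -x ∈ XS S (I : Set A)) ∧
    (∀ x y, x ∈ XS S (Set.univ : Set A) → y ∈ XS S (I : Set A) →
      x * y ∈ XS S (I : Set A)) ∧
    -- Frobenius and Verschiebung restrict
    (∀ m ∈ S, ∀ x ∈ XS S (Set.univ : Set A),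
      Frob S m x ∈ XS (truncDiv S m) (Set.univ : Set A)) ∧
    (∀ m ∈ S, ∀ x ∈ XS (truncDiv S m) (Set.univ : Set A),
      Versch S m x ∈ XS S (Set.univ : Set A)) ∧
    (∀ m ∈ S, ∀ x ∈ XS S (I : Set A),
      Frob S m x ∈ XS (truncDiv S m) (I : Set A)) ∧
    (∀ m ∈ S, ∀ x ∈ XS (truncDiv S m) (I : Set A),
      Versch S m x ∈ XS S (I : Set A)) := by
  letI : TopologicalSpace A := ⊥
  haveI : DiscreteTopology A := ⟨rfl⟩
  haveI : ContinuousAdd A := ⟨continuous_of_discreteTopology⟩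
  haveI : ContinuousNeg A := ⟨continuous_of_discreteTopology⟩
  haveI : ContinuousMul A := ⟨continuous_of_discreteTopology⟩
  haveI : @ContinuousAdd (S → A) (prodTop S A) _ := Pi.continuousAdd
  haveI : @ContinuousNeg (S → A) (prodTop S A) _ := Pi.continuousNeg
  haveI : @ContinuousMul (S → A) (prodTop S A) _ := Pi.continuousMul
  have hJu : ∀ c : A, ∀ b ∈ (Set.univ : Set A), ∀ k : ℕ, 0 < k →
      c * b ^ k ∈ (Set.univ : Set A) := fun _ _ _ _ _ => trivial
  have hJI : ∀ c : A, ∀ b ∈ (I : Set A), ∀ k : ℕ, 0 < k →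
      c * b ^ k ∈ (I : Set A) :=
    fun c b hb k hk => I.mul_mem_left c (I.pow_mem_of_mem hb k hk)
  have hJ'u : ∀ b ∈ (Set.univ : Set A), ∀ k : ℕ, 0 < k →
      b ^ k ∈ (Set.univ : Set A) := fun _ _ _ _ => trivial
  have hJ'I : ∀ b ∈ (I : Set A), ∀ k : ℕ, 0 < k → b ^ k ∈ (I : Set A) :=
    fun b hb k hk => I.pow_mem_of_mem hb k hk
  have h1S : (1 : ℕ) ∈ S := by
    obtain ⟨n, hn⟩ := hS.1
    exact hS.2.2 n hn 1 (one_dvd n) one_pos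
  have contF : ∀ m : ℕ, Continuous (Frob (A := A) S m) :=
    fun m => continuous_pi fun ν => continuous_apply _
  have contV : ∀ (T : Set ℕ) (m : ℕ), Continuous (Versch (A := A) T m) := by
    intro T m
    refine continuous_pi fun μ => ?_
    by_cases h : m ∣ μ.1
    · simp only [Versch, dif_pos h]
      exact continuous_const.mul (continuous_apply _)
    · simp only [Versch, dif_neg h]
      exact continuous_const
  refine ⟨isClosed_closure, ?_, ?_, ?_, ?_, isClosed_closure, ?_, ?_, ?_, ?_,
    ?_, ?_, ?_, ?_⟩
  · -- 1 ∈ XS S univ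
    refine subset_closure (AddSubgroup.subset_closure ⟨1, h1S, 1, trivial, ?_⟩)
    funext μ
    simp [Versch]
  · -- add univ
    intro x y hx hy
    exact map_mem_closure₂ continuous_add hx hy fun _ ha _ hb => add_mem ha hb
  · -- neg univ
    intro x hx
    exact map_mem_closure continuous_neg hx fun _ ha => neg_mem ha
  · -- mul univ
    intro x y hx hy
    exact map_mem_closure₂ continuous_mul hx hy fun a ha b hb =>
      grp_mul hS hJu a ha b hb
  · -- XS I ⊆ XS univ
    exact closure_mono (AddSubgroup.closure_mono
      (fun x ⟨n, hn, a, _, hx⟩ => ⟨n, hn, a, trivial, hx⟩))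
  · -- add I
    intro x y hx hy
    exact map_mem_closure₂ continuous_add hx hy fun _ ha _ hb => add_mem ha hb
  · -- neg I
    intro x hx
    exact map_mem_closure continuous_neg hx fun _ ha => neg_mem ha
  · -- mul univ I
    intro x y hx hy
    exact map_mem_closure₂ continuous_mul hx hy fun a ha b hb =>
      grp_mul hS hJI a ha b hb
  · -- Frob univ
    intro m hm x hx
    exact map_mem_closure (contF m) hx fun a ha => grp_frob hS hJ'u hm a ha
  · -- Versch univ
    intro m hm x hx
    exact map_mem_closure (contV S m) hx fun a ha =>
      grp_versch hS (Set.univ : Set A) hm a ha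
  · -- Frob I
    intro m hm x hx
    exact map_mem_closure (contF m) hx fun a ha => grp_frob hS hJ'I hm a ha
  · -- Versch I
    intro m hm x hx
    exact map_mem_closure (contV S m) hx fun a ha =>
      grp_versch hS (I : Set A) hm a ha
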